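/- Let G be a connected finite simple graph of order n ≥ 13 with degree sequence d₁ ≤ ⋯ ≤ d_n satisfying the weak Chvátal condition (for all 1 ≤ i < n/2, d_i ≥ i + 1 or d_{n−i} ≥ n − i − 1), having at most one vertex of degree 1, and with m(G,2) > 2. Let L = {v ∈ V(G) : d(v) ≥ (n−1)/2}, let I be a set of maximum cardinality among all closures ⟨A⟩ of two-element sets A ⊆ V(G) under 2-neighbor bootstrap percolation that have nonempty intersection with L, and let U = V(G) ∖ I. Then |L ∩ U| ≥ 3. -/

import Mathlib

open Finset
open scoped Classical

/-- One step of the `r`-neighbor bootstrap percolation process: all currently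
active vertices stay active, and every vertex with at least `r` active
neighbors becomes active. -/
noncomputable def bootStep {V : Type*} [Fintype V] (G : SimpleGraph V) (r : ℕ)
    (A : Finset V) : Finset V :=
  A ∪ Finset.univ.filter (fun v => r ≤ (G.neighborFinset v ∩ A).card)

/-- The closure of `A` under `r`-neighbor bootstrap percolation, i.e. `⋃ₜ Aₜ`.
Since the process is monotone on a finite vertex set, iterating `|V|` times
reaches the fixed point. -/
noncomputable def bootClosure {V : Type*} [Fintype V] (G : SimpleGraph V) (r : ℕ)
    (A : Finset V) : Finset V :=
  (bootStep G r)^[Fintype.card V] A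

/-- `G` `r`-percolates from the initially active set `A`. -/
def Percolates {V : Type*} [Fintype V] (G : SimpleGraph V) (r : ℕ)
    (A : Finset V) : Prop :=
  ∃ t : ℕ, (bootStep G r)^[t] A = Finset.univ

/-- `m(G, r)`: the minimum size of an `r`-contagious set in `G`. -/
noncomputable def minContagious {V : Type*} [Fintype V] (G : SimpleGraph V) (r : ℕ) : ℕ :=
  sInf {k : ℕ | ∃ A : Finset V, A.card = k ∧ Percolates G r A}


section Infra
variable {V : Type*} [Fintype V] (G : SimpleGraph V) (r : ℕ)

lemma subset_bootStep (A : Finset V) : A ⊆ bootStep G r A := subset_union_left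

lemma iter_subset_succ (A : Finset V) (k : ℕ) :
    (bootStep G r)^[k] A ⊆ (bootStep G r)^[k+1] A := by
  rw [Function.iterate_succ_apply']
  exact subset_bootStep G r _

lemma subset_bootClosure (A : Finset V) : A ⊆ bootClosure G r A := by
  unfold bootClosure
  generalize Fintype.card V = N
  induction N with
  | zero => simp
  | succ m ih => exact ih.trans (iter_subset_succ G r A m)

lemma bootStep_bootClosure (A : Finset V) :
    bootStep G r (bootClosure G r A) = bootClosure G r A := by
  classical
  set f := bootStep G r with hf
  set N := Fintype.card V with hN
  by_cases hex : ∃ j, j < N ∧ f^[j] A = f^[j+1] A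
  · obtain ⟨j, hjN, hfix⟩ := hex
    have hfixpt : f (f^[j] A) = f^[j] A := by
      conv_rhs => rw [hfix]
      rw [Function.iterate_succ_apply']
    have hall : ∀ m, f^[j + m] A = f^[j] A := by
      intro m
      rw [Nat.add_comm, Function.iterate_add_apply]
      exact Function.iterate_fixed hfixpt m
    have hNj : f^[N] A = f^[j] A := by
      have := hall (N - j)
      rwa [Nat.add_sub_cancel' (Nat.le_of_lt hjN)] at this
    show f (f^[N] A) = f^[N] A
    rw [hNj]; exact hfixpt
  · push_neg at hex
    have hgrow : ∀ j, j ≤ N → j ≤ (f^[j] A).card := by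
      intro j hj
      induction j with
      | zero => exact Nat.zero_le _
      | succ m ih =>
        have hm : m ≤ (f^[m] A).card := ih (Nat.le_of_succ_le hj)
        have hne : f^[m] A ≠ f^[m+1] A := hex m (Nat.lt_of_succ_le hj)
        have hsub : f^[m] A ⊆ f^[m+1] A := iter_subset_succ G r A m
        have : (f^[m] A).card < (f^[m+1] A).card :=
          Finset.card_lt_card (Finset.ssubset_iff_subset_ne.mpr ⟨hsub, hne⟩)
        omega
    have huniv : f^[N] A = Finset.univ := by
      apply Finset.eq_univ_of_card
      have h1 := hgrow N le_rfl
      have h2 : (f^[N] A).card ≤ Fintype.card V := Finset.card_le_univ _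
      omega
    show f (f^[N] A) = f^[N] A
    rw [huniv]
    exact Finset.Subset.antisymm (Finset.subset_univ _) (subset_bootStep G r _)

lemma mem_bootClosure_of_two {A : Finset V} {v a b : V}
    (ha : a ∈ bootClosure G 2 A) (hb : b ∈ bootClosure G 2 A) (hab : a ≠ b)
    (hva : G.Adj v a) (hvb : G.Adj v b) : v ∈ bootClosure G 2 A := by
  rw [← bootStep_bootClosure G 2 A]
  apply Finset.mem_union_right
  rw [Finset.mem_filter]
  refine ⟨Finset.mem_univ _, ?_⟩
  have hsub : ({a, b} : Finset V) ⊆ G.neighborFinset v ∩ bootClosure G 2 A := by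
    intro x hx
    rcases Finset.mem_insert.mp hx with h | h
    · subst h; exact Finset.mem_inter.mpr ⟨(SimpleGraph.mem_neighborFinset G v x).mpr hva, ha⟩
    · rw [Finset.mem_singleton] at h; subst h
      exact Finset.mem_inter.mpr ⟨(SimpleGraph.mem_neighborFinset G v x).mpr hvb, hb⟩
  calc 2 = ({a, b} : Finset V).card := (Finset.card_pair hab).symm
    _ ≤ _ := Finset.card_le_card hsub

lemma closure_closed {A : Finset V} {v : V} (hv : v ∉ bootClosure G 2 A) :
    (G.neighborFinset v ∩ bootClosure G 2 A).card ≤ 1 := by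
  by_contra h
  push_neg at h
  apply hv
  rw [← bootStep_bootClosure G 2 A]
  apply Finset.mem_union_right
  rw [Finset.mem_filter]
  exact ⟨Finset.mem_univ _, h⟩

lemma double_count (I : Finset V) :
    ∑ w ∈ I, (G.neighborFinset w ∩ (Finset.univ \ I)).card
      = ∑ x ∈ Finset.univ \ I, (G.neighborFinset x ∩ I).card := by
  have key : ∀ (s : Finset V) (w : V),
      (G.neighborFinset w ∩ s).card = ∑ x ∈ s, if G.Adj w x then 1 else 0 := by
    intro s w
    rw [← Finset.card_filter]
    congr 1
    ext x
    simp [SimpleGraph.mem_neighborFinset, Finset.mem_inter, and_comm]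
  simp only [key]
  rw [Finset.sum_comm]
  apply Finset.sum_congr rfl
  intro x _
  apply Finset.sum_congr rfl
  intro w _
  simp [G.adj_comm]

end Infra

section Sorted
variable {V : Type*} [Fintype V] (G : SimpleGraph V) {n : ℕ} (e : Fin n ≃ V)

lemma sorted_le (hcard : Fintype.card V = n)
    (hmono : ∀ i j : Fin n, i ≤ j → G.degree (e i) ≤ G.degree (e j))
    {j x : ℕ} (hj : j < n)
    (hcnt : j + 1 ≤ (Finset.univ.filter (fun v => G.degree v ≤ x)).card) :
    G.degree (e ⟨j, hj⟩) ≤ x := by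
  by_contra hgt
  push_neg at hgt
  set F := Finset.univ.filter (fun v => G.degree v ≤ x) with hF
  have hmem : ∀ v ∈ F, ((e.symm v : Fin n) : ℕ) < j := by
    intro v hv
    by_contra hge
    push_neg at hge
    have hle : (⟨j, hj⟩ : Fin n) ≤ e.symm v := hge
    have := hmono _ _ hle
    rw [Equiv.apply_symm_apply] at this
    have hvx : G.degree v ≤ x := (Finset.mem_filter.mp hv).2
    omega
  have h1 : F.card = (F.image (fun v => ((e.symm v : Fin n) : ℕ))).card :=
    (Finset.card_image_of_injective F
      (Function.Injective.comp Fin.val_injective e.symm.injective)).symm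
  have h3 : F.image (fun v => ((e.symm v : Fin n) : ℕ)) ⊆ Finset.range j := by
    intro m hm
    obtain ⟨v, hv, rfl⟩ := Finset.mem_image.mp hm
    exact Finset.mem_range.mpr (hmem v hv)
  have := Finset.card_le_card h3
  rw [Finset.card_range] at this
  omega

lemma count_high (hcard : Fintype.card V = n)
    (hmono : ∀ i j : Fin n, i ≤ j → G.degree (e i) ≤ G.degree (e j))
    {j x : ℕ} (hj : j < n) (hd : x ≤ G.degree (e ⟨j, hj⟩)) :
    n - j ≤ (Finset.univ.filter (fun v => x ≤ G.degree v)).card := by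
  have hinj : Function.Injective (fun m : Fin (n - j) => e (⟨j + (m : ℕ), by omega⟩ : Fin n)) := by
    intro a b hab
    have h2 := e.injective hab
    have : j + (a : ℕ) = j + (b : ℕ) := congrArg Fin.val h2
    exact Fin.ext (by omega)
  have hsub : (Finset.univ : Finset (Fin (n - j))).image
      (fun m : Fin (n - j) => e (⟨j + (m : ℕ), by omega⟩ : Fin n))
      ⊆ Finset.univ.filter (fun v => x ≤ G.degree v) := by
    intro v hv
    obtain ⟨m, _, rfl⟩ := Finset.mem_image.mp hv
    have hle : (⟨j, hj⟩ : Fin n) ≤ (⟨j + (m : ℕ), by omega⟩ : Fin n) := by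
      simp [Fin.le_def]
    exact Finset.mem_filter.mpr ⟨Finset.mem_univ _, le_trans hd (hmono _ _ hle)⟩
  calc n - j = (Finset.univ : Finset (Fin (n - j))).card := by simp
    _ = ((Finset.univ : Finset (Fin (n - j))).image
        (fun m : Fin (n - j) => e (⟨j + (m : ℕ), by omega⟩ : Fin n))).card :=
      (Finset.card_image_of_injective _ hinj).symm
    _ ≤ _ := Finset.card_le_card hsub

end Sorted

set_option maxHeartbeats 1000000 in
theorem stmt14 {V : Type*} [Fintype V] (G : SimpleGraph V)
    (hconn : G.Connected)
    (n : ℕ) (hcard : Fintype.card V = n) (hn : 13 ≤ n)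
    (e : Fin n ≃ V)
    (hmono : ∀ i j : Fin n, i ≤ j → G.degree (e i) ≤ G.degree (e j))
    (hchv : ∀ i : ℕ, ∀ h1 : 1 ≤ i, ∀ h2 : 2 * i < n,
      i + 1 ≤ G.degree (e ⟨i - 1, by omega⟩) ∨
      n - i - 1 ≤ G.degree (e ⟨n - i - 1, by omega⟩))
    (hdeg1 : (Finset.univ.filter (fun v => G.degree v = 1)).card ≤ 1)
    (hm : 2 < minContagious G 2)
    (L : Finset V) (hL : L = Finset.univ.filter (fun v => n - 1 ≤ 2 * G.degree v))
    (I : Finset V)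
    (hIcl : ∃ A : Finset V, A.card = 2 ∧ I = bootClosure G 2 A)
    (hIL : (I ∩ L).Nonempty)
    (hImax : ∀ A : Finset V, A.card = 2 → (bootClosure G 2 A ∩ L).Nonempty →
      (bootClosure G 2 A).card ≤ I.card) :
    3 ≤ (L ∩ (Finset.univ \ I)).card := by
  classical
  by_contra hcon
  push_neg at hcon
  obtain ⟨A₀, hA₀card, hIdef⟩ := hIcl
  set Uset := Finset.univ \ I with hUdef
  have hcon2 : (L ∩ Uset).card ≤ 2 := by omega
  clear hcon
  set k := n / 2 with hkdef
  set c := n - k with hcdef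
  have hkc : k + c = n ∧ k ≤ c ∧ c ≤ k + 1 ∧ 6 ≤ k ∧ 7 ≤ c := by omega
  set u := Uset.card with hucard
  have hIcard : I.card + u = n := by
    have h1 := Finset.card_sdiff_of_subset (Finset.subset_univ I)
    have h2 : I.card ≤ Fintype.card V := Finset.card_le_univ I
    rw [← hUdef] at h1
    rw [Finset.card_univ] at h1
    rw [hcard] at h1 h2
    omega
  have hLdeg : ∀ v : V, v ∈ L ↔ k ≤ G.degree v := by
    intro v; rw [hL]; simp only [Finset.mem_filter, Finset.mem_univ, true_and]; omega
  have hUmem : ∀ v : V, v ∈ Uset ↔ v ∉ I := by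
    intro v; rw [hUdef]; simp
  have hadjN : ∀ v w : V, w ∈ G.neighborFinset v ↔ G.Adj v w :=
    fun v w => SimpleGraph.mem_neighborFinset G v w
  have hclosed : ∀ v : V, v ∉ I → (G.neighborFinset v ∩ I).card ≤ 1 := by
    intro v hv
    rw [hIdef] at hv ⊢
    exact closure_closed G hv
  have hdeg_split : ∀ v : V,
      G.degree v = (G.neighborFinset v ∩ I).card + (G.neighborFinset v ∩ Uset).card := by
    intro v
    have h2 : G.neighborFinset v ∩ Uset = G.neighborFinset v \ I := by
      ext p
      rw [hUdef]
      simp only [Finset.mem_sdiff, Finset.mem_inter, Finset.mem_univ, true_and]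
    rw [h2, Finset.card_inter_add_card_sdiff, SimpleGraph.card_neighborFinset_eq_degree]
  have hdIle : ∀ v ∈ I, (G.neighborFinset v ∩ I).card ≤ I.card - 1 := by
    intro v hv
    have hsub : G.neighborFinset v ∩ I ⊆ I.erase v := by
      intro p hp
      rw [Finset.mem_erase]
      refine ⟨fun hpv => ?_, (Finset.mem_inter.mp hp).2⟩
      have := (hadjN v p).mp (Finset.mem_inter.mp hp).1
      exact G.ne_of_adj this hpv.symm
    have := Finset.card_le_card hsub
    rwa [Finset.card_erase_of_mem hv] at this
  have hdUle : ∀ v ∈ Uset, (G.neighborFinset v ∩ Uset).card ≤ u - 1 := by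
    intro v hv
    have hsub : G.neighborFinset v ∩ Uset ⊆ Uset.erase v := by
      intro p hp
      rw [Finset.mem_erase]
      refine ⟨fun hpv => ?_, (Finset.mem_inter.mp hp).2⟩
      have := (hadjN v p).mp (Finset.mem_inter.mp hp).1
      exact G.ne_of_adj this hpv.symm
    have := Finset.card_le_card hsub
    rwa [Finset.card_erase_of_mem hv] at this
  have hdIU1 : ∀ v ∈ Uset, (G.neighborFinset v ∩ I).card ≤ 1 := by
    intro v hv; exact hclosed v ((hUmem v).mp hv)
  have hUdegle : ∀ x ∈ Uset, G.degree x ≤ u := by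
    intro x hx
    have h1 := hdIU1 x hx
    have h2 := hdUle x hx
    have h3 := hdeg_split x
    have h4 : 1 ≤ u := by
      rw [hucard]; exact Finset.card_pos.mpr ⟨x, hx⟩
    omega
  have hEIU : ∑ w ∈ I, (G.neighborFinset w ∩ Uset).card ≤ u := by
    rw [hUdef] at *
    rw [double_count G I]
    calc ∑ x ∈ Finset.univ \ I, (G.neighborFinset x ∩ I).card
        ≤ ∑ _x ∈ Finset.univ \ I, 1 := by
          apply Finset.sum_le_sum
          intro x hx
          exact hclosed x (by rw [Finset.mem_sdiff] at hx; exact hx.2)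
      _ = u := by rw [Finset.sum_const, smul_eq_mul, mul_one]
  have hCHV : ∀ i : ℕ, 1 ≤ i → 2 * i < n →
      i ≤ (Finset.univ.filter (fun v => G.degree v ≤ i)).card →
      i + 1 ≤ (Finset.univ.filter (fun v => n - i - 1 ≤ G.degree v)).card := by
    intro i hi1 hi2 hlow
    have hjlt : i - 1 < n := by omega
    have hjlt2 : n - i - 1 < n := by omega
    rcases hchv i hi1 hi2 with hbr | hbr
    · exfalso
      have hle := sorted_le G e hcard hmono hjlt (x := i) (by omega)
      have hbr' : i + 1 ≤ G.degree (e ⟨i - 1, hjlt⟩) := hbr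
      omega
    · have hbr' : n - i - 1 ≤ G.degree (e ⟨n - i - 1, hjlt2⟩) := hbr
      have := count_high G e hcard hmono hjlt2 hbr'
      omega
  have hlL : c ≤ L.card := by
    by_cases hb : c - 1 ≤ (Finset.univ.filter (fun v => G.degree v ≤ c - 1)).card
    · have hh := hCHV (c - 1) (by omega) (by omega) hb
      have hsub : Finset.univ.filter (fun v => n - (c - 1) - 1 ≤ G.degree v) ⊆ L := by
        intro v hv
        rw [hLdeg]
        have := (Finset.mem_filter.mp hv).2
        omega
      have := Finset.card_le_card hsub
      omega
    · push_neg at hb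
      have hpart := Finset.card_filter_add_card_filter_not
        (s := (Finset.univ : Finset V)) (p := fun v => G.degree v ≤ c - 1)
      have hsub : Finset.univ.filter (fun v => ¬ (G.degree v ≤ c - 1)) ⊆ L := by
        intro v hv
        rw [hLdeg]
        have := (Finset.mem_filter.mp hv).2
        omega
      have h2 := Finset.card_le_card hsub
      rw [Finset.card_univ, hcard] at hpart
      omega
  have hLsplit : (L ∩ I).card + (L ∩ Uset).card = L.card := by
    have h1 := Finset.card_inter_add_card_sdiff L I
    have h2 : L \ I = L ∩ Uset := by
      ext v
      rw [hUdef]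
      simp only [Finset.mem_sdiff, Finset.mem_inter, Finset.mem_univ, true_and]
    rw [h2] at h1
    exact h1
  set t := (L ∩ I).card with htdef
  have htc : c - 2 ≤ t := by omega
  have htI : t ≤ I.card := Finset.card_le_card Finset.inter_subset_right
  have hmkUnl : ∀ h ∈ I, I.card - 1 ≤ (G.neighborFinset h ∩ I).card →
      ∀ z ∈ I, z ≠ h → G.Adj h z := by
    intro h hh hcard2 z hz hzh
    have hsub : G.neighborFinset h ∩ I ⊆ I.erase h := by
      intro p hp
      rw [Finset.mem_erase]
      refine ⟨fun hph => ?_, (Finset.mem_inter.mp hp).2⟩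
      have := (hadjN h p).mp (Finset.mem_inter.mp hp).1
      exact G.ne_of_adj this hph.symm
    have heq : G.neighborFinset h ∩ I = I.erase h := by
      apply Finset.eq_of_subset_of_card_le hsub
      rw [Finset.card_erase_of_mem hh]
      exact hcard2
    have hzmem : z ∈ G.neighborFinset h ∩ I := by
      rw [heq, Finset.mem_erase]; exact ⟨hzh, hz⟩
    exact (hadjN h z).mp (Finset.mem_inter.mp hzmem).1
  have hbeat : ∀ (B : Finset V), B.card = 2 → ∀ y, y ∈ bootClosure G 2 B → y ∉ I →
      (∀ z ∈ I, z ∈ bootClosure G 2 B) → ∀ w, w ∈ bootClosure G 2 B → w ∈ L → False := by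
    intro B hB2 y hyS hyI hIS w hwS hwL
    have hss : I ⊂ bootClosure G 2 B :=
      (Finset.ssubset_iff_of_subset (fun z hz => hIS z hz)).mpr ⟨y, hyS, hyI⟩
    have h1 : I.card < (bootClosure G 2 B).card := Finset.card_lt_card hss
    have h2 := hImax B hB2 ⟨w, Finset.mem_inter.mpr ⟨hwS, hwL⟩⟩
    omega
  have hUNIV2 : ∀ h h' : V, h ∈ I → h' ∈ I → h ≠ h' →
      (∀ z ∈ I, z ≠ h → G.Adj h z) → (∀ z ∈ I, z ≠ h' → G.Adj h' z) →
      h ∈ L → h' ∈ L →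
      (∃ y, y ∈ Uset ∧ ∃ w, w ∈ I ∧ G.Adj y w) → False := by
    intro h h' hhI hh'I hne hUnl hUnl' hhL hh'L hcrs
    obtain ⟨y, hyU, w, hwI, hyw⟩ := hcrs
    have hyI : y ∉ I := (hUmem y).mp hyU
    -- wlog w ≠ h by swapping h and h'
    have core : ∀ a b : V, a ∈ I → b ∈ I → a ≠ b →
        (∀ z ∈ I, z ≠ a → G.Adj a z) → (∀ z ∈ I, z ≠ b → G.Adj b z) →
        a ∈ L → w ≠ a → False := by
      intro a b haI hbI hab hUa hUb haL hwa
      set S := bootClosure G 2 ({y, a} : Finset V) with hS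
      have hya : y ≠ a := fun hh => hyI (hh ▸ haI)
      have hyS : y ∈ S := subset_bootClosure G 2 _ (by simp)
      have haS : a ∈ S := subset_bootClosure G 2 _ (by simp)
      have hwS : w ∈ S :=
        mem_bootClosure_of_two G hyS haS hya (G.symm.symm _ _ hyw) (G.symm.symm _ _ (hUa w hwI hwa))
      have hbS : b ∈ S := by
        by_cases hbw : b = w
        · rw [hbw]; exact hwS
        · exact mem_bootClosure_of_two G haS hwS (fun hh => hwa hh.symm)
            (hUb a haI hab) (hUb w hwI (Ne.symm hbw))
      have hIS : ∀ z ∈ I, z ∈ S := by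
        intro z hz
        by_cases hza : z = a
        · rw [hza]; exact haS
        by_cases hzb : z = b
        · rw [hzb]; exact hbS
        · exact mem_bootClosure_of_two G haS hbS hab
            (G.symm.symm _ _ (hUa z hz hza)) (G.symm.symm _ _ (hUb z hz hzb))
      exact hbeat _ (Finset.card_pair hya) y hyS hyI hIS a haS haL
    by_cases hwh : w = h
    · exact core h' h hh'I hhI (Ne.symm hne) hUnl' hUnl hh'L (by rw [hwh]; exact hne)
    · exact core h h' hhI hh'I hne hUnl hUnl' hhL hwh
  have hcross : Uset.Nonempty → ∃ y, y ∈ Uset ∧ ∃ w, w ∈ I ∧ G.Adj y w := by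
    intro ⟨v₀, hv₀⟩
    obtain ⟨w₁, hw₁⟩ := hIL
    have hw₁I : w₁ ∈ I := (Finset.mem_inter.mp hw₁).1
    have haux : ∀ (a b : V), G.Walk a b → a ∈ I → b ∉ I →
        ∃ y, y ∈ Uset ∧ ∃ w, w ∈ I ∧ G.Adj y w := by
      intro a b p
      induction p with
      | nil => intro ha hb; exact absurd ha hb
      | @cons x y' z hadj q ih =>
        intro ha hb
        by_cases hyI : y' ∈ I
        · exact ih hyI hb
        · exact ⟨y', (hUmem y').mpr hyI, x, ha, G.symm.symm _ _ hadj⟩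
    obtain ⟨p⟩ := hconn.preconnected w₁ v₀
    exact haux w₁ v₀ p hw₁I ((hUmem v₀).mp hv₀)
  -- main case split on u
  by_cases hu0 : u = 0
  · -- I = univ, percolation contradiction
    have hUempty : Uset = ∅ := Finset.card_eq_zero.mp (by omega)
    have hIuniv : I = Finset.univ := by
      rw [hUdef] at hUempty
      have := Finset.sdiff_eq_empty_iff_subset.mp hUempty
      exact Finset.univ_subset_iff.mp this
    have hclos : bootClosure G 2 A₀ = Finset.univ := by rw [← hIdef]; exact hIuniv
    have hperc : Percolates G 2 A₀ := ⟨Fintype.card V, hclos⟩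
    have : minContagious G 2 ≤ 2 := Nat.sInf_le ⟨A₀, hA₀card, hperc⟩
    omega
  by_cases hu1 : u = 1
  · -- pendant-vertex case
    have hmindeg : ∀ v : V, 1 ≤ G.degree v := by
      intro v
      have hcard2 : 1 < Fintype.card V := by omega
      obtain ⟨w, hwv⟩ := Fintype.exists_ne_of_one_lt_card hcard2 v
      obtain ⟨p⟩ := hconn.preconnected v w
      cases p with
      | nil => exact absurd rfl hwv
      | cons hadj q =>
        have : 0 < G.degree v := (G.degree_pos_iff_exists_adj v).mpr ⟨_, hadj⟩
        omega
    obtain ⟨x, hxU⟩ := Finset.card_eq_one.mp (show Uset.card = 1 by omega)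
    have hxmem : x ∈ Uset := by rw [hxU]; exact Finset.mem_singleton_self x
    have hxI : x ∉ I := (hUmem x).mp hxmem
    have hdx : G.degree x ≤ 1 := by
      have h1 := hdIU1 x hxmem
      have h2 := hdUle x hxmem
      have h3 := hdeg_split x
      omega
    obtain ⟨y₀, hy₀U, w₀, hw₀I, hyw₀⟩ := hcross ⟨x, hxmem⟩
    have hy₀x : y₀ = x := by
      rw [hxU] at hy₀U
      exact Finset.mem_singleton.mp hy₀U
    have hxw₀ : G.Adj x w₀ := by rw [← hy₀x]; exact hyw₀
    have hdx1 : G.degree x = 1 := by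
      have : 0 < G.degree x := (G.degree_pos_iff_exists_adj x).mpr ⟨w₀, hxw₀⟩
      omega
    have hNx : G.neighborFinset x = {w₀} := by
      symm
      apply Finset.eq_of_subset_of_card_le
      · intro p hp
        rw [Finset.mem_singleton] at hp
        rw [hp]
        exact (hadjN x w₀).mpr hxw₀
      · rw [SimpleGraph.card_neighborFinset_eq_degree, hdx1, Finset.card_singleton]
    have hadjx : ∀ z : V, G.Adj x z → z = w₀ := by
      intro z hz
      have : z ∈ G.neighborFinset x := (hadjN x z).mpr hz
      rw [hNx, Finset.mem_singleton] at this
      exact this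
    have hone : 1 ≤ (Finset.univ.filter (fun v => G.degree v ≤ 1)).card := by
      apply Finset.card_pos.mpr
      exact ⟨x, Finset.mem_filter.mpr ⟨Finset.mem_univ _, hdx⟩⟩
    have h2big := hCHV 1 le_rfl (by omega) hone
    obtain ⟨g₁, hg₁, g₂, hg₂, hgne⟩ := Finset.one_lt_card.mp
      (show 1 < (Finset.univ.filter (fun v => n - 1 - 1 ≤ G.degree v)).card by omega)
    have hg₁d : n - 1 - 1 ≤ G.degree g₁ := (Finset.mem_filter.mp hg₁).2
    have hg₂d : n - 1 - 1 ≤ G.degree g₂ := (Finset.mem_filter.mp hg₂).2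
    have hkey : ∀ g : V, n - 1 - 1 ≤ G.degree g → g ≠ w₀ →
        ∀ z : V, z ≠ g → z ≠ x → G.Adj g z := by
      intro g hgd hgw z hzg hzx
      have hgx : g ≠ x := by
        intro heq
        rw [heq, hdx1] at hgd
        omega
      have hgnx : ¬ G.Adj g x := by
        intro hadj
        exact hgw (hadjx g (G.symm.symm _ _ hadj))
      have hsub : G.neighborFinset g ⊆ Finset.univ \ ({g, x} : Finset V) := by
        intro p hp
        rw [Finset.mem_sdiff]
        refine ⟨Finset.mem_univ _, ?_⟩
        simp only [Finset.mem_insert, Finset.mem_singleton, not_or]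
        have hadj : G.Adj g p := (hadjN g p).mp hp
        constructor
        · exact fun heq => G.ne_of_adj hadj heq.symm
        · intro heq
          rw [heq] at hadj
          exact hgnx hadj
      have hcard2 : ({g, x} : Finset V).card = 2 := Finset.card_pair hgx
      have hcard3 : (Finset.univ \ ({g, x} : Finset V)).card = n - 2 := by
        rw [Finset.card_sdiff_of_subset (Finset.subset_univ _), Finset.card_univ, hcard, hcard2]
      have heq : G.neighborFinset g = Finset.univ \ ({g, x} : Finset V) := by
        apply Finset.eq_of_subset_of_card_le hsub
        rw [hcard3, SimpleGraph.card_neighborFinset_eq_degree]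
        omega
      have hzmem : z ∈ G.neighborFinset g := by
        rw [heq, Finset.mem_sdiff]
        refine ⟨Finset.mem_univ _, ?_⟩
        simp only [Finset.mem_insert, Finset.mem_singleton, not_or]
        exact ⟨hzg, hzx⟩
      exact (hadjN g z).mp hzmem
    have hcaseB : ∀ g : V, n - 1 - 1 ≤ G.degree g → g ≠ w₀ →
        n - 1 - 1 ≤ G.degree w₀ → False := by
      intro g hgd hgw hw₀d
      have hgx : g ≠ x := by
        intro heq; rw [heq, hdx1] at hgd; omega
      have hxg : x ≠ g := Ne.symm hgx
      have hxS : x ∈ bootClosure G 2 {x, g} := subset_bootClosure G 2 _ (by simp)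
      have hgS : g ∈ bootClosure G 2 {x, g} := subset_bootClosure G 2 _ (by simp)
      have hw₀g : w₀ ≠ g := Ne.symm hgw
      have hw₀x : w₀ ≠ x := fun heq => hxI (heq ▸ hw₀I)
      have hw₀S : w₀ ∈ bootClosure G 2 {x, g} :=
        mem_bootClosure_of_two G hxS hgS hxg (G.symm.symm _ _ hxw₀)
          (G.symm.symm _ _ (hkey g hgd hgw w₀ hw₀g hw₀x))
      have hbig : ∀ z, z ∈ G.neighborFinset w₀ → z ≠ x → z ∈ bootClosure G 2 {x, g} := by
        intro z hz hzx
        by_cases hzg : z = g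
        · rw [hzg]; exact hgS
        · have hadj1 : G.Adj z w₀ := G.symm.symm _ _ ((hadjN w₀ z).mp hz)
          have hadj2 : G.Adj z g := G.symm.symm _ _ (hkey g hgd hgw z hzg hzx)
          exact mem_bootClosure_of_two G hw₀S hgS hw₀g hadj1 hadj2
      have hxinN : x ∈ G.neighborFinset w₀ := (hadjN w₀ x).mpr (G.symm.symm _ _ hxw₀)
      have hsub2 : insert x (insert w₀ (G.neighborFinset w₀ \ {x})) ⊆
          bootClosure G 2 {x, g} := by
        intro p hp
        rcases Finset.mem_insert.mp hp with hpx | hp2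
        · rw [hpx]; exact hxS
        rcases Finset.mem_insert.mp hp2 with hpw | hp3
        · rw [hpw]; exact hw₀S
        obtain ⟨hpN, hpx⟩ := Finset.mem_sdiff.mp hp3
        exact hbig p hpN (by simpa using hpx)
      have hcardins : (insert x (insert w₀ (G.neighborFinset w₀ \ {x}))).card =
          G.degree w₀ + 1 := by
        rw [Finset.card_insert_of_notMem, Finset.card_insert_of_notMem,
          Finset.card_sdiff_of_subset (Finset.singleton_subset_iff.mpr hxinN),
          SimpleGraph.card_neighborFinset_eq_degree]
        · have : 1 ≤ G.degree w₀ := hmindeg w₀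
          simp only [Finset.card_singleton]
          omega
        · rw [Finset.mem_sdiff]
          intro ⟨hc, _⟩
          exact (G.irrefl ((hadjN w₀ w₀).mp hc))
        · intro hc
          rcases Finset.mem_insert.mp hc with hx1 | hx2
          · exact hw₀x hx1.symm
          · rw [Finset.mem_sdiff] at hx2
            exact hx2.2 (Finset.mem_singleton_self x)
      have hScard : n - 1 ≤ (bootClosure G 2 ({x, g} : Finset V)).card := by
        have := Finset.card_le_card hsub2
        omega
      have hTcard : (Finset.univ \ bootClosure G 2 ({x, g} : Finset V)).card ≤ 1 := by
        have h1 := Finset.card_sdiff_of_subset (Finset.subset_univ (bootClosure G 2 ({x, g} : Finset V)))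
        have h2 : (bootClosure G 2 ({x, g} : Finset V)).card ≤ Fintype.card V :=
          Finset.card_le_univ _
        rw [Finset.card_univ] at h1
        rw [hcard] at h1 h2
        omega
      have hgL : g ∈ L := by rw [hLdeg]; omega
      rcases Nat.le_one_iff_eq_zero_or_eq_one.mp hTcard with hT0 | hT1
      · have hSuniv : ∀ z : V, z ∈ bootClosure G 2 ({x, g} : Finset V) := by
          intro z
          by_contra hc
          have : z ∈ Finset.univ \ bootClosure G 2 ({x, g} : Finset V) :=
            Finset.mem_sdiff.mpr ⟨Finset.mem_univ _, hc⟩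
          have := Finset.card_pos.mpr ⟨z, this⟩
          omega
        exact hbeat _ (Finset.card_pair hxg) x hxS hxI (fun z _ => hSuniv z) g hgS hgL
      · obtain ⟨v, hv⟩ := Finset.card_eq_one.mp hT1
        have hvmem : v ∈ Finset.univ \ bootClosure G 2 ({x, g} : Finset V) := by
          rw [hv]; exact Finset.mem_singleton_self v
        have hvS : v ∉ bootClosure G 2 ({x, g} : Finset V) := (Finset.mem_sdiff.mp hvmem).2
        have hrest : ∀ p : V, p ≠ v → p ∈ bootClosure G 2 ({x, g} : Finset V) := by
          intro p hpv
          by_contra hc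
          have : p ∈ Finset.univ \ bootClosure G 2 ({x, g} : Finset V) :=
            Finset.mem_sdiff.mpr ⟨Finset.mem_univ _, hc⟩
          rw [hv, Finset.mem_singleton] at this
          exact hpv this
        have hNveq : G.neighborFinset v ∩ bootClosure G 2 ({x, g} : Finset V) =
            G.neighborFinset v := by
          apply Finset.inter_eq_left.mpr
          intro p hp
          exact hrest p (fun heq => (G.irrefl ((hadjN v v).mp (heq ▸ hp))))
        have hclv := closure_closed G (A := ({x, g} : Finset V)) hvS
        rw [hNveq, SimpleGraph.card_neighborFinset_eq_degree] at hclv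
        have hvx : v ≠ x := fun heq => hvS (heq ▸ hxS)
        have hdv1 : G.degree v = 1 := by
          have := hmindeg v
          omega
        have hsub12 : ({x, v} : Finset V) ⊆ Finset.univ.filter (fun z => G.degree z = 1) := by
          intro p hp
          rcases Finset.mem_insert.mp hp with h1 | h2
          · exact Finset.mem_filter.mpr ⟨Finset.mem_univ _, h1 ▸ hdx1⟩
          · rw [Finset.mem_singleton] at h2
            exact Finset.mem_filter.mpr ⟨Finset.mem_univ _, h2 ▸ hdv1⟩
        have := Finset.card_le_card hsub12
        rw [Finset.card_pair (Ne.symm hvx)] at this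
        omega
    have hcaseA : ∀ g g' : V, n - 1 - 1 ≤ G.degree g → n - 1 - 1 ≤ G.degree g' →
        g ≠ g' → g ≠ w₀ → g' ≠ w₀ → False := by
      intro g g' hgd hg'd hgg' hgw hg'w
      have hgx : g ≠ x := by
        intro heq; rw [heq, hdx1] at hgd; omega
      have hg'x : g' ≠ x := by
        intro heq; rw [heq, hdx1] at hg'd; omega
      have hxg : x ≠ g := Ne.symm hgx
      have hxS : x ∈ bootClosure G 2 {x, g} := subset_bootClosure G 2 _ (by simp)
      have hgS : g ∈ bootClosure G 2 {x, g} := subset_bootClosure G 2 _ (by simp)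
      have hw₀g : w₀ ≠ g := Ne.symm hgw
      have hw₀x : w₀ ≠ x := fun heq => hxI (heq ▸ hw₀I)
      have hw₀S : w₀ ∈ bootClosure G 2 {x, g} :=
        mem_bootClosure_of_two G hxS hgS hxg (G.symm.symm _ _ hxw₀)
          (G.symm.symm _ _ (hkey g hgd hgw w₀ hw₀g hw₀x))
      have hg'S : g' ∈ bootClosure G 2 {x, g} := by
        have hadj1 : G.Adj g' g := hkey g' hg'd hg'w g hgg' hgx
        have hadj2 : G.Adj g' w₀ := hkey g' hg'd hg'w w₀ (Ne.symm hg'w) hw₀x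
        exact mem_bootClosure_of_two G hgS hw₀S (fun hc => hgw hc) hadj1 hadj2
      have hall : ∀ z : V, z ∈ bootClosure G 2 ({x, g} : Finset V) := by
        intro z
        by_cases hzg : z = g
        · rw [hzg]; exact hgS
        by_cases hzg' : z = g'
        · rw [hzg']; exact hg'S
        by_cases hzx : z = x
        · rw [hzx]; exact hxS
        have hadj1 : G.Adj z g := G.symm.symm _ _ (hkey g hgd hgw z hzg hzx)
        have hadj2 : G.Adj z g' := G.symm.symm _ _ (hkey g' hg'd hg'w z hzg' hzx)
        exact mem_bootClosure_of_two G hgS hg'S hgg' hadj1 hadj2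
      have hgL : g ∈ L := by rw [hLdeg]; omega
      exact hbeat _ (Finset.card_pair hxg) x hxS hxI (fun z _ => hall z) g hgS hgL
    by_cases hgw1 : g₁ = w₀
    · have hg₂w : g₂ ≠ w₀ := by rw [← hgw1]; exact Ne.symm hgne
      exact hcaseB g₂ hg₂d hg₂w (hgw1 ▸ hg₁d)
    · by_cases hgw2 : g₂ = w₀
      · exact hcaseB g₁ hg₁d hgw1 (hgw2 ▸ hg₂d)
      · exact hcaseA g₁ g₂ hg₁d hg₂d hgne hgw1 hgw2
  by_cases hurigid : u ≤ k - 1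
  · -- rigid structure branch, 2 ≤ u ≤ k-1
    have hu2 : 2 ≤ u := by omega
    have hlowU : u ≤ (Finset.univ.filter (fun v => G.degree v ≤ u)).card := by
      have hsub : Uset ⊆ Finset.univ.filter (fun v => G.degree v ≤ u) := by
        intro x hx
        exact Finset.mem_filter.mpr ⟨Finset.mem_univ _, hUdegle x hx⟩
      have := Finset.card_le_card hsub
      omega
    set H := Finset.univ.filter (fun v => n - u - 1 ≤ G.degree v) with hHdef
    have hHcard : u + 1 ≤ H.card := hCHV u (by omega) (by omega) hlowU
    have hHI : H ⊆ I := by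
      intro v hv
      have hdv := (Finset.mem_filter.mp hv).2
      by_contra hvI
      have := hUdegle v ((hUmem v).mpr hvI)
      omega
    have hHdeg : ∀ h ∈ H, n - u - 1 ≤
        (G.neighborFinset h ∩ I).card + (G.neighborFinset h ∩ Uset).card := by
      intro h hh
      have := (Finset.mem_filter.mp hh).2
      rw [hdeg_split h] at this
      exact this
    set A' := H.filter (fun h => (G.neighborFinset h ∩ I).card = n - u - 1) with hA'def
    set Nu := H.filter (fun h => ¬ ((G.neighborFinset h ∩ I).card = n - u - 1)) with hNudef
    have hpart : A'.card + Nu.card = H.card :=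
      Finset.card_filter_add_card_filter_not
        (s := H) (p := fun h => (G.neighborFinset h ∩ I).card = n - u - 1)
    have hNuI : Nu ⊆ I := fun h hh => hHI (Finset.filter_subset _ _ hh)
    have hA'I : A' ⊆ I := fun h hh => hHI (Finset.filter_subset _ _ hh)
    have hNuprops : ∀ h ∈ Nu, (G.neighborFinset h ∩ I).card ≤ n - u - 2 ∧
        1 ≤ (G.neighborFinset h ∩ Uset).card := by
      intro h hh
      obtain ⟨hhH, hne⟩ := Finset.mem_filter.mp hh
      have h1 := hdIle h (hHI hhH)
      have h2 := hHdeg h hhH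
      constructor <;> omega
    have hA'univ : ∀ h ∈ A', ∀ z ∈ I, z ≠ h → G.Adj h z := by
      intro h hh
      have := (Finset.mem_filter.mp hh).2
      exact hmkUnl h (hA'I hh) (by omega)
    have hA'L : ∀ h ∈ A', h ∈ L := by
      intro h hh
      have := (Finset.mem_filter.mp (Finset.filter_subset _ _ hh)).2
      rw [hLdeg]
      omega
    have hUne : Uset.Nonempty := Finset.card_pos.mp (by omega)
    have hA'1 : A'.card ≤ 1 := by
      by_contra hAL
      push_neg at hAL
      obtain ⟨h, hh, h', hh', hne⟩ := Finset.one_lt_card.mp hAL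
      exact hUNIV2 h h' (hA'I hh) (hA'I hh') hne (hA'univ h hh) (hA'univ h' hh')
        (hA'L h hh) (hA'L h' hh') (hcross hUne)
    have hsumNu : Nu.card ≤ ∑ h ∈ Nu, (G.neighborFinset h ∩ Uset).card := by
      have := Finset.card_nsmul_le_sum Nu
        (fun h => (G.neighborFinset h ∩ Uset).card) 1 (fun h hh => (hNuprops h hh).2)
      simpa using this
    have hsumNuler : ∑ h ∈ Nu, (G.neighborFinset h ∩ Uset).card ≤
        ∑ h ∈ I, (G.neighborFinset h ∩ Uset).card :=
      Finset.sum_le_sum_of_subset hNuI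
    have hNucard : Nu.card = u ∧ A'.card = 1 := by omega
    have hsumNuU : ∑ h ∈ Nu, (G.neighborFinset h ∩ Uset).card = u := by omega
    have hNudU1 : ∀ h ∈ Nu, (G.neighborFinset h ∩ Uset).card = 1 := by
      intro h hh
      by_contra hne2
      have h2 : 2 ≤ (G.neighborFinset h ∩ Uset).card := by
        have := (hNuprops h hh).2
        omega
      have hsplit : (G.neighborFinset h ∩ Uset).card +
          ∑ x ∈ Nu.erase h, (G.neighborFinset x ∩ Uset).card =
          ∑ x ∈ Nu, (G.neighborFinset x ∩ Uset).card :=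
        Finset.add_sum_erase Nu (fun h => (G.neighborFinset h ∩ Uset).card) hh
      have hsame : ∑ x ∈ Nu, (G.neighborFinset x ∩ Uset).card =
          ∑ h ∈ Nu, (G.neighborFinset h ∩ Uset).card := rfl
      have herase : (Nu.erase h).card ≤
          ∑ x ∈ Nu.erase h, (G.neighborFinset x ∩ Uset).card := by
        have := Finset.card_nsmul_le_sum (Nu.erase h)
          (fun x => (G.neighborFinset x ∩ Uset).card) 1
          (fun x hx => (hNuprops x (Finset.mem_of_mem_erase hx)).2)
        simpa using this
      have hce : (Nu.erase h).card = u - 1 := by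
        rw [Finset.card_erase_of_mem hh]
        omega
      omega
    have hsumI : ∑ h ∈ I, (G.neighborFinset h ∩ Uset).card = u := by omega
    have hoff : ∀ w ∈ I, w ∉ Nu → (G.neighborFinset w ∩ Uset).card = 0 := by
      intro w hwI hwNu
      have hsd : ∑ h ∈ I \ Nu, (G.neighborFinset h ∩ Uset).card +
          ∑ h ∈ Nu, (G.neighborFinset h ∩ Uset).card =
          ∑ h ∈ I, (G.neighborFinset h ∩ Uset).card :=
        Finset.sum_sdiff hNuI
      have hz : ∑ h ∈ I \ Nu, (G.neighborFinset h ∩ Uset).card = 0 := by omega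
      exact Finset.sum_eq_zero_iff.mp hz w (Finset.mem_sdiff.mpr ⟨hwI, hwNu⟩)
    have hNuw : ∀ h, h ∈ Nu → ∃ yy, yy ∈ Uset ∧ G.Adj h yy ∧ ∃ mu, mu ∈ I ∧ mu ≠ h ∧
        ¬ G.Adj h mu ∧ (∀ z ∈ I, z ≠ h → z ≠ mu → G.Adj h z) := by
      intro h hh
      obtain ⟨yy, hyy⟩ := Finset.card_eq_one.mp (hNudU1 h hh)
      have hyymem : yy ∈ G.neighborFinset h ∩ Uset := by
        rw [hyy]; exact Finset.mem_singleton_self yy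
      have hyyU : yy ∈ Uset := (Finset.mem_inter.mp hyymem).2
      have hyyadj : G.Adj h yy := (hadjN h yy).mp (Finset.mem_inter.mp hyymem).1
      have hdIh : (G.neighborFinset h ∩ I).card = n - u - 2 := by
        have h1 := (hNuprops h hh).1
        have h2 := hHdeg h (Finset.filter_subset _ _ hh)
        have h3 := hNudU1 h hh
        omega
      have hsub : G.neighborFinset h ∩ I ⊆ I.erase h := by
        intro p hp
        rw [Finset.mem_erase]
        refine ⟨fun hph => ?_, (Finset.mem_inter.mp hp).2⟩
        have := (hadjN h p).mp (Finset.mem_inter.mp hp).1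
        exact G.ne_of_adj this hph.symm
      have hMcard : ((I.erase h) \ (G.neighborFinset h ∩ I)).card = 1 := by
        rw [Finset.card_sdiff_of_subset hsub, Finset.card_erase_of_mem (hNuI hh), hdIh]
        omega
      obtain ⟨mu, hmu⟩ := Finset.card_eq_one.mp hMcard
      have hmumem : mu ∈ (I.erase h) \ (G.neighborFinset h ∩ I) := by
        rw [hmu]; exact Finset.mem_singleton_self mu
      obtain ⟨hmuer, hmunotin⟩ := Finset.mem_sdiff.mp hmumem
      obtain ⟨hmuneh, hmuI⟩ := Finset.mem_erase.mp hmuer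
      refine ⟨yy, hyyU, hyyadj, mu, hmuI, hmuneh, fun hadj => ?_, fun z hz hzh hzmu => ?_⟩
      · exact hmunotin (Finset.mem_inter.mpr ⟨(hadjN h mu).mpr hadj, hmuI⟩)
      · have hzer : z ∈ I.erase h := Finset.mem_erase.mpr ⟨hzh, hz⟩
        by_cases hzn : z ∈ G.neighborFinset h ∩ I
        · exact (hadjN h z).mp (Finset.mem_inter.mp hzn).1
        · exfalso
          have hzsd : z ∈ (I.erase h) \ (G.neighborFinset h ∩ I) :=
            Finset.mem_sdiff.mpr ⟨hzer, hzn⟩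
          rw [hmu, Finset.mem_singleton] at hzsd
          exact hzmu hzsd
    choose yf hyfU hyfadj muf hmufI hmufne hmufnadj hmufadj using hNuw
    obtain ⟨hstar, hstareq⟩ := Finset.card_eq_one.mp hNucard.2
    have hstarA : hstar ∈ A' := by rw [hstareq]; exact Finset.mem_singleton_self hstar
    have hstarI : hstar ∈ I := hA'I hstarA
    have hstarUnl : ∀ z ∈ I, z ≠ hstar → G.Adj hstar z := hA'univ hstar hstarA
    have hstarL : hstar ∈ L := hA'L hstar hstarA
    have hstarne : ∀ h ∈ Nu, h ≠ hstar := by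
      intro h hh heq
      have h1 := (Finset.mem_filter.mp hh).2
      have h2 := (Finset.mem_filter.mp hstarA).2
      rw [heq] at h1
      exact h1 h2
    have hmiss_symm : ∀ a, ∀ (ha : a ∈ Nu), ∀ b, ∀ (hb : b ∈ Nu), a ≠ b → ¬ G.Adj a b →
        muf a ha = b ∧ muf b hb = a := by
      intro a ha b hb hab hnadj
      constructor
      · by_contra hne2
        exact hnadj (hmufadj a ha b (hNuI hb) (Ne.symm hab) (fun hc => hne2 hc.symm))
      · by_contra hne2
        exact hnadj (G.symm.symm _ _ (hmufadj b hb a (hNuI ha) hab (fun hc => hne2 hc.symm)))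
    by_cases hcase1 : ∃ a, ∃ (ha : a ∈ Nu), ∃ b, ∃ (hb : b ∈ Nu),
        a ≠ b ∧ G.Adj a b ∧ muf a ha ≠ muf b hb
    · obtain ⟨a, ha, b, hb, hab, hadjab, hmune⟩ := hcase1
      have hyU : yf a ha ∈ Uset := hyfU a ha
      have hyI : yf a ha ∉ I := (hUmem _).mp hyU
      have hyb : yf a ha ≠ b := fun hh => hyI (hh ▸ hNuI hb)
      have hyS : yf a ha ∈ bootClosure G 2 {yf a ha, b} :=
        subset_bootClosure G 2 _ (by simp)
      have hbS : b ∈ bootClosure G 2 {yf a ha, b} :=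
        subset_bootClosure G 2 _ (by simp)
      have haS : a ∈ bootClosure G 2 {yf a ha, b} :=
        mem_bootClosure_of_two G hyS hbS hyb (hyfadj a ha) hadjab
      have hane : a ≠ hstar := hstarne a ha
      have hbne : b ≠ hstar := hstarne b hb
      have hstarS : hstar ∈ bootClosure G 2 {yf a ha, b} :=
        mem_bootClosure_of_two G haS hbS hab
          (hstarUnl a (hNuI ha) hane) (hstarUnl b (hNuI hb) hbne)
      have hIS : ∀ z ∈ I, z ∈ bootClosure G 2 {yf a ha, b} := by
        intro z hz
        by_cases hza : z = a
        · rw [hza]; exact haS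
        by_cases hzb : z = b
        · rw [hzb]; exact hbS
        by_cases hzs : z = hstar
        · rw [hzs]; exact hstarS
        have hz1 : G.Adj z hstar := G.symm.symm _ _ (hstarUnl z hz hzs)
        by_cases hzmua : z = muf a ha
        · have hz2 : G.Adj b z := hmufadj b hb z hz hzb (by rw [hzmua]; exact hmune)
          exact mem_bootClosure_of_two G hstarS hbS (Ne.symm hbne) hz1 (G.symm.symm _ _ hz2)
        · have hz2 : G.Adj a z := hmufadj a ha z hz hza hzmua
          exact mem_bootClosure_of_two G hstarS haS (Ne.symm hane) hz1 (G.symm.symm _ _ hz2)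
      exact hbeat _ (Finset.card_pair hyb) (yf a ha) hyS hyI hIS hstar hstarS hstarL
    by_cases hcase2 : ∃ a, ∃ (ha : a ∈ Nu), ∃ b, ∃ (hb : b ∈ Nu), a ≠ b ∧ ¬ G.Adj a b
    · obtain ⟨a, ha, b, hb, hab, hnadj⟩ := hcase2
      obtain ⟨hmua, hmub⟩ := hmiss_symm a ha b hb hab hnadj
      have hane : a ≠ hstar := hstarne a ha
      have hbne : b ≠ hstar := hstarne b hb
      have hyU : yf a ha ∈ Uset := hyfU a ha
      have hyI : yf a ha ∉ I := (hUmem _).mp hyU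
      have hys : yf a ha ≠ hstar := fun hh => hyI (hh ▸ hstarI)
      have hyS : yf a ha ∈ bootClosure G 2 {yf a ha, hstar} :=
        subset_bootClosure G 2 _ (by simp)
      have hstarS : hstar ∈ bootClosure G 2 {yf a ha, hstar} :=
        subset_bootClosure G 2 _ (by simp)
      have haS : a ∈ bootClosure G 2 {yf a ha, hstar} :=
        mem_bootClosure_of_two G hyS hstarS hys (hyfadj a ha)
          (G.symm.symm _ _ (hstarUnl a (hNuI ha) hane))
      have hIbS : ∀ z ∈ I, z ≠ b → z ∈ bootClosure G 2 {yf a ha, hstar} := by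
        intro z hz hzb
        by_cases hza : z = a
        · rw [hza]; exact haS
        by_cases hzs : z = hstar
        · rw [hzs]; exact hstarS
        have hz2 : G.Adj a z := hmufadj a ha z hz hza (by rw [hmua]; exact hzb)
        exact mem_bootClosure_of_two G hstarS haS (Ne.symm hane)
          (G.symm.symm _ _ (hstarUnl z hz hzs)) (G.symm.symm _ _ hz2)
      have hz₁ex : (I \ ({a, b, hstar} : Finset V)).Nonempty := by
        apply Finset.card_pos.mp
        have h1 := Finset.le_card_sdiff ({a, b, hstar} : Finset V) I
        have h2 : ({a, b, hstar} : Finset V).card ≤ 3 := by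
          apply le_trans (Finset.card_insert_le _ _)
          have := Finset.card_insert_le b ({hstar} : Finset V)
          simp only [Finset.card_singleton] at this
          omega
        omega
      obtain ⟨z₁, hz₁⟩ := hz₁ex
      obtain ⟨hz₁I, hz₁n⟩ := Finset.mem_sdiff.mp hz₁
      simp only [Finset.mem_insert, Finset.mem_singleton, not_or] at hz₁n
      obtain ⟨hz₁a, hz₁b, hz₁s⟩ := hz₁n
      have hbS : b ∈ bootClosure G 2 {yf a ha, hstar} := by
        have hz₁S := hIbS z₁ hz₁I hz₁b
        have hadjbz : G.Adj b z₁ := hmufadj b hb z₁ hz₁I hz₁b (by rw [hmub]; exact hz₁a)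
        exact mem_bootClosure_of_two G hz₁S hstarS hz₁s hadjbz
          (G.symm.symm _ _ (hstarUnl b (hNuI hb) hbne))
      have hIS : ∀ z ∈ I, z ∈ bootClosure G 2 {yf a ha, hstar} := by
        intro z hz
        by_cases hzb : z = b
        · rw [hzb]; exact hbS
        · exact hIbS z hz hzb
      exact hbeat _ (Finset.card_pair hys) (yf a ha) hyS hyI hIS hstar hstarS hstarL
    · push_neg at hcase1 hcase2
      obtain ⟨h₀, hh₀, h₁, hh₁, hne01⟩ := Finset.one_lt_card.mp
        (show 1 < Nu.card by omega)
      have hadj01 : G.Adj h₀ h₁ := hcase2 h₀ hh₀ h₁ hh₁ hne01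
      have hconst : ∀ h, ∀ (hh : h ∈ Nu), muf h hh = muf h₀ hh₀ := by
        intro h hh
        by_cases hhh : h = h₀
        · subst hhh; rfl
        · exact hcase1 h hh h₀ hh₀ hhh (hcase2 h hh h₀ hh₀ hhh)
      have hz₀I : muf h₀ hh₀ ∈ I := hmufI h₀ hh₀
      have hz₀Nu : muf h₀ hh₀ ∉ Nu := by
        intro hz
        have hne0 : h₀ ≠ muf h₀ hh₀ := Ne.symm (hmufne h₀ hh₀)
        exact (hmufnadj h₀ hh₀) (hcase2 h₀ hh₀ (muf h₀ hh₀) hz hne0)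
      have hz₀star : muf h₀ hh₀ ≠ hstar := by
        intro heq
        apply hmufnadj h₀ hh₀
        rw [heq]
        exact G.symm.symm _ _ (hstarUnl h₀ (hNuI hh₀) (hstarne h₀ hh₀))
      have hz₀dU : (G.neighborFinset (muf h₀ hh₀) ∩ Uset).card = 0 :=
        hoff _ hz₀I hz₀Nu
      have hz₀deg : 2 ≤ G.degree (muf h₀ hh₀) := by
        by_contra hlt
        push_neg at hlt
        have hone : 1 ≤ (Finset.univ.filter (fun v => G.degree v ≤ 1)).card := by
          apply Finset.card_pos.mpr
          exact ⟨muf h₀ hh₀, Finset.mem_filter.mpr ⟨Finset.mem_univ _, by omega⟩⟩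
        have h1le := hCHV 1 le_rfl (by omega) hone
        have hnone : (Finset.univ.filter (fun v => n - 1 - 1 ≤ G.degree v)) = ∅ := by
          rw [Finset.filter_eq_empty_iff]
          intro v _
          by_cases hvU : v ∈ Uset
          · have := hUdegle v hvU
            omega
          · have hvI : v ∈ I := by
              by_contra hc
              exact hvU ((hUmem v).mpr hc)
            have h2 := hdIle v hvI
            have h3 := hdeg_split v
            by_cases hvNu : v ∈ Nu
            · have h4 := hNudU1 v hvNu
              have h5 := (hNuprops v hvNu).1
              omega
            · have h4 := hoff v hvI hvNu
              omega
        rw [hnone] at h1le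
        simp at h1le
      have hyU : yf h₀ hh₀ ∈ Uset := hyfU h₀ hh₀
      have hyI : yf h₀ hh₀ ∉ I := (hUmem _).mp hyU
      have hyh₁ : yf h₀ hh₀ ≠ h₁ := fun hh => hyI (hh ▸ hNuI hh₁)
      have hyS : yf h₀ hh₀ ∈ bootClosure G 2 {yf h₀ hh₀, h₁} :=
        subset_bootClosure G 2 _ (by simp)
      have hh₁S : h₁ ∈ bootClosure G 2 {yf h₀ hh₀, h₁} :=
        subset_bootClosure G 2 _ (by simp)
      have hh₀S : h₀ ∈ bootClosure G 2 {yf h₀ hh₀, h₁} :=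
        mem_bootClosure_of_two G hyS hh₁S hyh₁ (hyfadj h₀ hh₀) hadj01
      have hstarS : hstar ∈ bootClosure G 2 {yf h₀ hh₀, h₁} :=
        mem_bootClosure_of_two G hh₀S hh₁S hne01
          (hstarUnl h₀ (hNuI hh₀) (hstarne h₀ hh₀)) (hstarUnl h₁ (hNuI hh₁) (hstarne h₁ hh₁))
      have hIz : ∀ z ∈ I, z ≠ muf h₀ hh₀ → z ∈ bootClosure G 2 {yf h₀ hh₀, h₁} := by
        intro z hz hzz₀
        by_cases hz0 : z = h₀
        · rw [hz0]; exact hh₀S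
        by_cases hzs : z = hstar
        · rw [hzs]; exact hstarS
        have hz2 : G.Adj h₀ z := hmufadj h₀ hh₀ z hz hz0 hzz₀
        exact mem_bootClosure_of_two G hstarS hh₀S
          (Ne.symm (hstarne h₀ hh₀)) (G.symm.symm _ _ (hstarUnl z hz hzs)) (G.symm.symm _ _ hz2)
      have hz₀S : muf h₀ hh₀ ∈ bootClosure G 2 {yf h₀ hh₀, h₁} := by
        have hdeg2 : 1 < (G.neighborFinset (muf h₀ hh₀)).card := by
          rw [SimpleGraph.card_neighborFinset_eq_degree]
          omega
        obtain ⟨p, hp, q, hq, hpq⟩ := Finset.one_lt_card.mp hdeg2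
        have hmem : ∀ r, r ∈ G.neighborFinset (muf h₀ hh₀) →
            r ∈ bootClosure G 2 {yf h₀ hh₀, h₁} := by
          intro r hr
          have hrI : r ∈ I := by
            by_contra hc
            have hrU : r ∈ Uset := (hUmem r).mpr hc
            have : r ∈ G.neighborFinset (muf h₀ hh₀) ∩ Uset := Finset.mem_inter.mpr ⟨hr, hrU⟩
            have := Finset.card_pos.mpr ⟨r, this⟩
            omega
          have hradj : G.Adj (muf h₀ hh₀) r := (hadjN _ r).mp hr
          exact hIz r hrI (Ne.symm (G.ne_of_adj hradj))
        exact mem_bootClosure_of_two G (hmem p hp) (hmem q hq) hpq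
          ((hadjN _ p).mp hp) ((hadjN _ q).mp hq)
      have hIS : ∀ z ∈ I, z ∈ bootClosure G 2 {yf h₀ hh₀, h₁} := by
        intro z hz
        by_cases hzz : z = muf h₀ hh₀
        · rw [hzz]; exact hz₀S
        · exact hIz z hz hzz
      exact hbeat _ (Finset.card_pair hyh₁) (yf h₀ hh₀) hyS hyI hIS hstar hstarS hstarL
  by_cases huc : u = c
  · -- u = c : many universal vertices in I ∩ L, contradiction via hUNIV2
    have hIck : I.card = k := by omega
    have hUne : Uset.Nonempty := Finset.card_pos.mp (by omega)
    have hstep : ∀ w ∈ L ∩ I, 1 ≤ (G.neighborFinset w ∩ Uset).card := by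
      intro w hw
      have hwI : w ∈ I := (Finset.mem_inter.mp hw).2
      have hwL : k ≤ G.degree w := (hLdeg w).mp (Finset.mem_inter.mp hw).1
      have h1 := hdeg_split w
      have h2 := hdIle w hwI
      omega
    have hAL1 : ((L ∩ I).filter (fun w => k - 1 ≤ (G.neighborFinset w ∩ I).card)).card ≤ 1 := by
      by_contra hAL
      push_neg at hAL
      obtain ⟨h, hh, h', hh', hne⟩ := Finset.one_lt_card.mp hAL
      obtain ⟨hhLI, hhdI⟩ := Finset.mem_filter.mp hh
      obtain ⟨hh'LI, hh'dI⟩ := Finset.mem_filter.mp hh'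
      have hhI : h ∈ I := (Finset.mem_inter.mp hhLI).2
      have hh'I : h' ∈ I := (Finset.mem_inter.mp hh'LI).2
      exact hUNIV2 h h' hhI hh'I hne
        (hmkUnl h hhI (by omega)) (hmkUnl h' hh'I (by omega))
        (Finset.mem_inter.mp hhLI).1 (Finset.mem_inter.mp hh'LI).1 (hcross hUne)
    have hstep2 : ∀ w ∈ (L ∩ I).filter
        (fun w => ¬ (k - 1 ≤ (G.neighborFinset w ∩ I).card)),
        2 ≤ (G.neighborFinset w ∩ Uset).card := by
      intro w hw
      obtain ⟨hwLI, hwdI⟩ := Finset.mem_filter.mp hw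
      have hwI : w ∈ I := (Finset.mem_inter.mp hwLI).2
      have hwL : k ≤ G.degree w := (hLdeg w).mp (Finset.mem_inter.mp hwLI).1
      have h1 := hdeg_split w
      omega
    have hsumsplit := Finset.sum_filter_add_sum_filter_not (L ∩ I)
      (fun w => k - 1 ≤ (G.neighborFinset w ∩ I).card)
      (fun w => (G.neighborFinset w ∩ Uset).card)
    have hcards := Finset.card_filter_add_card_filter_not
      (s := L ∩ I) (p := fun w => k - 1 ≤ (G.neighborFinset w ∩ I).card)
    have hs1 : ((L ∩ I).filter (fun w => ¬ (k - 1 ≤ (G.neighborFinset w ∩ I).card))).card * 2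
        ≤ ∑ w ∈ (L ∩ I).filter (fun w => ¬ (k - 1 ≤ (G.neighborFinset w ∩ I).card)),
          (G.neighborFinset w ∩ Uset).card := by
      have := Finset.card_nsmul_le_sum
        ((L ∩ I).filter (fun w => ¬ (k - 1 ≤ (G.neighborFinset w ∩ I).card)))
        (fun w => (G.neighborFinset w ∩ Uset).card) 2 hstep2
      simpa [smul_eq_mul] using this
    have hs3 : ∑ w ∈ L ∩ I, (G.neighborFinset w ∩ Uset).card ≤ u :=
      le_trans (Finset.sum_le_sum_of_subset Finset.inter_subset_right) hEIU
    have hs4 : 0 ≤ ∑ w ∈ (L ∩ I).filter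
        (fun w => k - 1 ≤ (G.neighborFinset w ∩ I).card),
        (G.neighborFinset w ∩ Uset).card := Nat.zero_le _
    omega
  by_cases huk : u = k
  · -- n odd, u = k
    have hodd : c = k + 1 ∧ n = 2 * k + 1 := by omega
    have hIck : I.card = k + 1 := by omega
    have hUne : Uset.Nonempty := Finset.card_pos.mp (by omega)
    by_cases hlcase : L.card ≤ k + 2
    · -- high-degree vertices argument
      have hLPeq : Finset.univ.filter (fun v => k ≤ G.degree v) = L := by
        ext v
        rw [Finset.mem_filter]
        rw [hLdeg v]
        simp
      have hpartL := Finset.card_filter_add_card_filter_not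
        (s := (Finset.univ : Finset V)) (p := fun v => k ≤ G.degree v)
      rw [hLPeq, Finset.card_univ, hcard] at hpartL
      have hsublow : Finset.univ.filter (fun v => ¬ (k ≤ G.degree v)) ⊆
          Finset.univ.filter (fun v => G.degree v ≤ k - 1) := by
        intro v hv
        have := (Finset.mem_filter.mp hv).2
        exact Finset.mem_filter.mpr ⟨Finset.mem_univ _, by omega⟩
      have hcntlow : k - 1 ≤ (Finset.univ.filter (fun v => G.degree v ≤ k - 1)).card := by
        have := Finset.card_le_card hsublow
        omega
      have hLpcnt := hCHV (k - 1) (by omega) (by omega) hcntlow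
      set Lp := Finset.univ.filter (fun v => n - (k - 1) - 1 ≤ G.degree v) with hLpdef
      have hLpk : k ≤ Lp.card := by omega
      have hLpdeg : ∀ h ∈ Lp, k + 1 ≤ G.degree h := by
        intro h hh
        have := (Finset.mem_filter.mp hh).2
        omega
      have hLpI : Lp ⊆ I := by
        intro v hv
        by_contra hc
        have := hUdegle v ((hUmem v).mpr hc)
        have := hLpdeg v hv
        omega
      have hLpdU : ∀ h ∈ Lp, 1 ≤ (G.neighborFinset h ∩ Uset).card := by
        intro h hh
        have h1 := hdIle h (hLpI hh)
        have h2 := hdeg_split h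
        have h3 := hLpdeg h hh
        omega
      have hsumLp : Lp.card ≤ ∑ h ∈ Lp, (G.neighborFinset h ∩ Uset).card := by
        have := Finset.card_nsmul_le_sum Lp
          (fun h => (G.neighborFinset h ∩ Uset).card) 1 hLpdU
        simpa using this
      have hsumLpler : ∑ h ∈ Lp, (G.neighborFinset h ∩ Uset).card ≤
          ∑ h ∈ I, (G.neighborFinset h ∩ Uset).card :=
        Finset.sum_le_sum_of_subset hLpI
      have hLpcard : Lp.card = k := by omega
      have hsumLpeq : ∑ h ∈ Lp, (G.neighborFinset h ∩ Uset).card = k := by omega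
      have hLpdU1 : ∀ h ∈ Lp, (G.neighborFinset h ∩ Uset).card = 1 := by
        intro h hh
        by_contra hne2
        have h2 : 2 ≤ (G.neighborFinset h ∩ Uset).card := by
          have := hLpdU h hh
          omega
        have hsplit : (G.neighborFinset h ∩ Uset).card +
            ∑ x ∈ Lp.erase h, (G.neighborFinset x ∩ Uset).card =
            ∑ x ∈ Lp, (G.neighborFinset x ∩ Uset).card :=
          Finset.add_sum_erase Lp (fun h => (G.neighborFinset h ∩ Uset).card) hh
        have herase : (Lp.erase h).card ≤
            ∑ x ∈ Lp.erase h, (G.neighborFinset x ∩ Uset).card := by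
          have := Finset.card_nsmul_le_sum (Lp.erase h)
            (fun x => (G.neighborFinset x ∩ Uset).card) 1
            (fun x hx => hLpdU x (Finset.mem_of_mem_erase hx))
          simpa using this
        have hce : (Lp.erase h).card = k - 1 := by
          rw [Finset.card_erase_of_mem hh]
          omega
        omega
      have hLpUnl : ∀ h ∈ Lp, ∀ z ∈ I, z ≠ h → G.Adj h z := by
        intro h hh
        apply hmkUnl h (hLpI hh)
        have h1 := hdeg_split h
        have h2 := hLpdeg h hh
        have h3 := hLpdU1 h hh
        have h4 := hdIle h (hLpI hh)
        omega
      obtain ⟨h, hh, h', hh', hne⟩ := Finset.one_lt_card.mp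
        (show 1 < Lp.card by omega)
      exact hUNIV2 h h' (hLpI hh) (hLpI hh') hne (hLpUnl h hh) (hLpUnl h' hh')
        (by rw [hLdeg]; have := hLpdeg h hh; omega)
        (by rw [hLdeg]; have := hLpdeg h' hh'; omega) (hcross hUne)
    · -- L.card = k + 3, I ⊆ L, two universal-in-U vertices
      have hl3 : L.card = k + 3 ∧ t = k + 1 ∧ (L ∩ Uset).card = 2 := by omega
      have hIsubL : I ⊆ L := by
        have heq : L ∩ I = I :=
          Finset.eq_of_subset_of_card_le Finset.inter_subset_right (by omega)
        intro z hz
        rw [← heq] at hz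
        exact (Finset.mem_inter.mp hz).1
      have hxprop : ∀ x, x ∈ L ∩ Uset → (G.neighborFinset x ∩ I).card = 1 ∧
          (∀ z, z ∈ Uset → z ≠ x → G.Adj x z) := by
        intro x hx
        have hxL := (Finset.mem_inter.mp hx).1
        have hxU := (Finset.mem_inter.mp hx).2
        have hdk1 := hUdegle x hxU
        have hdk2 := (hLdeg x).mp hxL
        have h1 := hdIU1 x hxU
        have h2 := hdUle x hxU
        have h3 := hdeg_split x
        have hdIx : (G.neighborFinset x ∩ I).card = 1 := by omega
        have hdUx : (G.neighborFinset x ∩ Uset).card = u - 1 := by omega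
        have hsub : G.neighborFinset x ∩ Uset ⊆ Uset.erase x := by
          intro p hp
          rw [Finset.mem_erase]
          refine ⟨fun hpv => ?_, (Finset.mem_inter.mp hp).2⟩
          have := (hadjN x p).mp (Finset.mem_inter.mp hp).1
          exact G.ne_of_adj this hpv.symm
        have heqq : G.neighborFinset x ∩ Uset = Uset.erase x := by
          apply Finset.eq_of_subset_of_card_le hsub
          rw [Finset.card_erase_of_mem hxU, hdUx]
        refine ⟨hdIx, fun z hzU hzx => ?_⟩
        have hzmem : z ∈ G.neighborFinset x ∩ Uset := by
          rw [heqq]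
          exact Finset.mem_erase.mpr ⟨hzx, hzU⟩
        exact (hadjN x z).mp (Finset.mem_inter.mp hzmem).1
      obtain ⟨x₁, x₂, hx12, hLU2⟩ := Finset.card_eq_two.mp hl3.2.2
      have hx₁mem : x₁ ∈ L ∩ Uset := by rw [hLU2]; exact Finset.mem_insert_self _ _
      have hx₂mem : x₂ ∈ L ∩ Uset := by
        rw [hLU2]
        exact Finset.mem_insert_of_mem (Finset.mem_singleton_self _)
      have hx₁U : x₁ ∈ Uset := (Finset.mem_inter.mp hx₁mem).2
      have hx₂U : x₂ ∈ Uset := (Finset.mem_inter.mp hx₂mem).2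
      have hx₁L : x₁ ∈ L := (Finset.mem_inter.mp hx₁mem).1
      obtain ⟨w₂, hw₂eq⟩ := Finset.card_eq_one.mp (hxprop x₂ hx₂mem).1
      have hw₂mem : w₂ ∈ G.neighborFinset x₂ ∩ I := by
        rw [hw₂eq]; exact Finset.mem_singleton_self _
      have hw₂I : w₂ ∈ I := (Finset.mem_inter.mp hw₂mem).2
      have hadjx₂w₂ : G.Adj x₂ w₂ := (hadjN x₂ w₂).mp (Finset.mem_inter.mp hw₂mem).1
      obtain ⟨w₁, hw₁eq⟩ := Finset.card_eq_one.mp (hxprop x₁ hx₁mem).1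
      have hw₁mem : w₁ ∈ G.neighborFinset x₁ ∩ I := by
        rw [hw₁eq]; exact Finset.mem_singleton_self _
      have hw₁I : w₁ ∈ I := (Finset.mem_inter.mp hw₁mem).2
      have hadjx₁w₁ : G.Adj x₁ w₁ := (hadjN x₁ w₁).mp (Finset.mem_inter.mp hw₁mem).1
      have hx₁w₂ : x₁ ≠ w₂ := fun heq => ((hUmem x₁).mp hx₁U) (heq ▸ hw₂I)
      have hx₁S : x₁ ∈ bootClosure G 2 {x₁, w₂} := subset_bootClosure G 2 _ (by simp)
      have hw₂S : w₂ ∈ bootClosure G 2 {x₁, w₂} := subset_bootClosure G 2 _ (by simp)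
      have hx₂S : x₂ ∈ bootClosure G 2 {x₁, w₂} :=
        mem_bootClosure_of_two G hx₁S hw₂S hx₁w₂
          ((hxprop x₂ hx₂mem).2 x₁ hx₁U hx12) hadjx₂w₂
      have hUS : ∀ z ∈ Uset, z ∈ bootClosure G 2 ({x₁, w₂} : Finset V) := by
        intro z hz
        by_cases hz1 : z = x₁
        · rw [hz1]; exact hx₁S
        by_cases hz2 : z = x₂
        · rw [hz2]; exact hx₂S
        have hadj1 : G.Adj z x₁ := G.symm.symm _ _ ((hxprop x₁ hx₁mem).2 z hz hz1)
        have hadj2 : G.Adj z x₂ := G.symm.symm _ _ ((hxprop x₂ hx₂mem).2 z hz hz2)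
        exact mem_bootClosure_of_two G hx₁S hx₂S hx12 hadj1 hadj2
      have hw₂U : w₂ ∉ Uset := fun hc => ((hUmem w₂).mp hc) hw₂I
      have hins : insert w₂ Uset ⊆ bootClosure G 2 ({x₁, w₂} : Finset V) := by
        intro p hp
        rcases Finset.mem_insert.mp hp with h1 | h2
        · rw [h1]; exact hw₂S
        · exact hUS p h2
      have hcardins : (insert w₂ Uset).card = k + 1 := by
        rw [Finset.card_insert_of_notMem hw₂U]
        omega
      have hmax2 := hImax {x₁, w₂} (Finset.card_pair hx₁w₂)
        ⟨x₁, Finset.mem_inter.mpr ⟨hx₁S, hx₁L⟩⟩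
      have hSeq : insert w₂ Uset = bootClosure G 2 ({x₁, w₂} : Finset V) :=
        Finset.eq_of_subset_of_card_le hins (by omega)
      have hstruct : ∀ z ∈ I, z ≠ w₂ →
          ((G.neighborFinset z ∩ bootClosure G 2 ({x₁, w₂} : Finset V)).card = 1 ∧
           ∀ z' ∈ I, z' ≠ w₂ → z' ≠ z → G.Adj z z') := by
        intro z hz hzw
        have hzS : z ∉ bootClosure G 2 ({x₁, w₂} : Finset V) := by
          rw [← hSeq]
          intro hc
          rcases Finset.mem_insert.mp hc with h1 | h2
          · exact hzw h1
          · exact ((hUmem z).mp h2) hz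
        have hcl := closure_closed G hzS
        have hdz : k ≤ G.degree z := (hLdeg z).mp (hIsubL hz)
        have hsubNS : G.neighborFinset z \ bootClosure G 2 ({x₁, w₂} : Finset V) ⊆
            (I.erase w₂).erase z := by
          intro p hp
          obtain ⟨hpN, hpS⟩ := Finset.mem_sdiff.mp hp
          have hpI : p ∈ I := by
            by_contra hc
            exact hpS (hUS p ((hUmem p).mpr hc))
          have hpw : p ≠ w₂ := fun heq => hpS (heq ▸ hw₂S)
          have hpz : p ≠ z := Ne.symm (G.ne_of_adj ((hadjN z p).mp hpN))
          exact Finset.mem_erase.mpr ⟨hpz, Finset.mem_erase.mpr ⟨hpw, hpI⟩⟩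
        have hc1 : ((I.erase w₂).erase z).card = k - 1 := by
          rw [Finset.card_erase_of_mem (Finset.mem_erase.mpr ⟨hzw, hz⟩),
            Finset.card_erase_of_mem hw₂I, hIck]
          omega
        have hsplitz := Finset.card_inter_add_card_sdiff (G.neighborFinset z)
          (bootClosure G 2 ({x₁, w₂} : Finset V))
        rw [SimpleGraph.card_neighborFinset_eq_degree] at hsplitz
        have hle2 := Finset.card_le_card hsubNS
        have hNSa : (G.neighborFinset z ∩ bootClosure G 2 ({x₁, w₂} : Finset V)).card = 1 := by
          omega
        have hNSeq : G.neighborFinset z \ bootClosure G 2 ({x₁, w₂} : Finset V) =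
            (I.erase w₂).erase z :=
          Finset.eq_of_subset_of_card_le hsubNS (by omega)
        refine ⟨hNSa, fun z' hz'I hz'w hz'z => ?_⟩
        have hz'mem : z' ∈ G.neighborFinset z \ bootClosure G 2 ({x₁, w₂} : Finset V) := by
          rw [hNSeq]
          exact Finset.mem_erase.mpr ⟨hz'z, Finset.mem_erase.mpr ⟨hz'w, hz'I⟩⟩
        exact (hadjN z z').mp (Finset.mem_sdiff.mp hz'mem).1
      have hTB1 : ((I.erase w₂).filter (fun z => G.Adj z w₂)).card ≤ 1 := by
        by_contra hTB
        push_neg at hTB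
        obtain ⟨z, hz, z', hz', hzz'⟩ := Finset.one_lt_card.mp hTB
        obtain ⟨hzer, hzadj⟩ := Finset.mem_filter.mp hz
        obtain ⟨hz'er, hz'adj⟩ := Finset.mem_filter.mp hz'
        obtain ⟨hzw, hzI⟩ := Finset.mem_erase.mp hzer
        obtain ⟨hz'w, hz'I⟩ := Finset.mem_erase.mp hz'er
        have hUnlz : ∀ p ∈ I, p ≠ z → G.Adj z p := by
          intro p hp hpz
          by_cases hpw : p = w₂
          · rw [hpw]; exact hzadj
          · exact (hstruct z hzI hzw).2 p hp hpw hpz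
        have hUnlz' : ∀ p ∈ I, p ≠ z' → G.Adj z' p := by
          intro p hp hpz
          by_cases hpw : p = w₂
          · rw [hpw]; exact hz'adj
          · exact (hstruct z' hz'I hz'w).2 p hp hpw hpz
        exact hUNIV2 z z' hzI hz'I hzz' hUnlz hUnlz'
          (hIsubL hzI) (hIsubL hz'I) (hcross hUne)
      set TA := (I.erase w₂).filter (fun z => ¬ G.Adj z w₂) with hTAdef
      have hTApart : ((I.erase w₂).filter (fun z => G.Adj z w₂)).card + TA.card =
          (I.erase w₂).card :=
        Finset.card_filter_add_card_filter_not
          (s := I.erase w₂) (p := fun z => G.Adj z w₂)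
      have herasecard : (I.erase w₂).card = k := by
        rw [Finset.card_erase_of_mem hw₂I, hIck]
        omega
      have hTAk : k - 1 ≤ TA.card := by omega
      have hTAI : ∀ z ∈ TA, z ∈ I ∧ z ≠ w₂ ∧ ¬ G.Adj z w₂ := by
        intro z hz
        obtain ⟨hzer, hzn⟩ := Finset.mem_filter.mp hz
        obtain ⟨hzw, hzI⟩ := Finset.mem_erase.mp hzer
        exact ⟨hzI, hzw, hzn⟩
      have hTAy : ∀ z, z ∈ TA → ∃ yz, yz ∈ Uset ∧ G.Adj z yz := by
        intro z hz
        obtain ⟨hzI, hzw, hzn⟩ := hTAI z hz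
        obtain ⟨yz, hyzeq⟩ := Finset.card_eq_one.mp (hstruct z hzI hzw).1
        have hyzmem : yz ∈ G.neighborFinset z ∩ bootClosure G 2 ({x₁, w₂} : Finset V) := by
          rw [hyzeq]; exact Finset.mem_singleton_self _
        have hyzS := (Finset.mem_inter.mp hyzmem).2
        have hyzadj : G.Adj z yz := (hadjN z yz).mp (Finset.mem_inter.mp hyzmem).1
        rw [← hSeq] at hyzS
        rcases Finset.mem_insert.mp hyzS with h1 | h2
        · exact absurd (h1 ▸ hyzadj) hzn
        · exact ⟨yz, h2, hyzadj⟩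
      choose yg hygU hygadj using hTAy
      have hyinj : ∀ z, ∀ (hz : z ∈ TA), ∀ z', ∀ (hz' : z' ∈ TA),
          yg z hz = yg z' hz' → z = z' := by
        intro z hz z' hz' heq
        by_contra hne
        have h1 : z ∈ G.neighborFinset (yg z hz) ∩ I :=
          Finset.mem_inter.mpr ⟨(hadjN _ z).mpr (G.symm.symm _ _ (hygadj z hz)), (hTAI z hz).1⟩
        have h2 : z' ∈ G.neighborFinset (yg z hz) ∩ I := by
          rw [heq]
          exact Finset.mem_inter.mpr ⟨(hadjN _ z').mpr (G.symm.symm _ _ (hygadj z' hz')), (hTAI z' hz').1⟩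
        have hsub2 : ({z, z'} : Finset V) ⊆ G.neighborFinset (yg z hz) ∩ I := by
          intro p hp
          rcases Finset.mem_insert.mp hp with hp1 | hp2
          · rw [hp1]; exact h1
          · rw [Finset.mem_singleton] at hp2; rw [hp2]; exact h2
        have := Finset.card_le_card hsub2
        rw [Finset.card_pair hne] at this
        have := hdIU1 (yg z hz) (hygU z hz)
        omega
      have hfinal : ∀ a b, ∀ (ha : a ∈ TA), ∀ (hb : b ∈ TA), a ≠ b →
          yg a ha ≠ x₁ → False := by
        intro a b ha hb hab hyax
        obtain ⟨haI, haw, han⟩ := hTAI a ha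
        obtain ⟨hbI, hbw, hbn⟩ := hTAI b hb
        have hadja : ∀ z' ∈ I, z' ≠ w₂ → z' ≠ a → G.Adj a z' := (hstruct a haI haw).2
        have hadjb : ∀ z' ∈ I, z' ≠ w₂ → z' ≠ b → G.Adj b z' := (hstruct b hbI hbw).2
        have hyU2 : yg a ha ∈ Uset := hygU a ha
        have hyI2 : yg a ha ∉ I := (hUmem _).mp hyU2
        have hyb : yg a ha ≠ b := fun heq => hyI2 (heq ▸ hbI)
        have hyS' : yg a ha ∈ bootClosure G 2 {yg a ha, b} :=
          subset_bootClosure G 2 _ (by simp)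
        have hbS' : b ∈ bootClosure G 2 {yg a ha, b} := subset_bootClosure G 2 _ (by simp)
        have haS' : a ∈ bootClosure G 2 {yg a ha, b} :=
          mem_bootClosure_of_two G hyS' hbS' hyb (hygadj a ha)
            (hadja b hbI hbw (Ne.symm hab))
        have hIS' : ∀ z ∈ I, z ≠ w₂ → z ∈ bootClosure G 2 {yg a ha, b} := by
          intro z hz hzw
          by_cases hza : z = a
          · rw [hza]; exact haS'
          by_cases hzb : z = b
          · rw [hzb]; exact hbS'
          exact mem_bootClosure_of_two G haS' hbS' hab
            (G.symm.symm _ _ (hadja z hz hzw hza)) (G.symm.symm _ _ (hadjb z hz hzw hzb))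
        by_cases hw12 : w₁ = w₂
        · -- counting contradiction
          have hdUw₂ : k - 1 ≤ (G.neighborFinset w₂ ∩ Uset).card := by
            have hdw : k ≤ G.degree w₂ := (hLdeg w₂).mp (hIsubL hw₂I)
            have hsubTB : G.neighborFinset w₂ ∩ I ⊆
                (I.erase w₂).filter (fun z => G.Adj z w₂) := by
              intro p hp
              have hadj : G.Adj w₂ p := (hadjN w₂ p).mp (Finset.mem_inter.mp hp).1
              refine Finset.mem_filter.mpr ⟨Finset.mem_erase.mpr
                ⟨Ne.symm (G.ne_of_adj hadj), (Finset.mem_inter.mp hp).2⟩, G.symm.symm _ _ hadj⟩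
            have h5 := Finset.card_le_card hsubTB
            have h6 := hdeg_split w₂
            omega
          have hw₂TA : w₂ ∉ TA := by
            intro hc
            exact (hTAI w₂ hc).2.1 rfl
          have hTAsum : TA.card ≤ ∑ z ∈ TA, (G.neighborFinset z ∩ Uset).card := by
            have := Finset.card_nsmul_le_sum TA
              (fun z => (G.neighborFinset z ∩ Uset).card) 1
              (fun z hz => Finset.card_pos.mpr
                ⟨yg z hz, Finset.mem_inter.mpr
                  ⟨(hadjN z (yg z hz)).mpr (hygadj z hz), hygU z hz⟩⟩)
            simpa using this
          have hinssum : ∑ z ∈ insert w₂ TA, (G.neighborFinset z ∩ Uset).card =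
              (G.neighborFinset w₂ ∩ Uset).card +
              ∑ z ∈ TA, (G.neighborFinset z ∩ Uset).card :=
            Finset.sum_insert hw₂TA
          have hinssub : insert w₂ TA ⊆ I := by
            intro p hp
            rcases Finset.mem_insert.mp hp with h1 | h2
            · rw [h1]; exact hw₂I
            · exact (hTAI p h2).1
          have hinsle : ∑ z ∈ insert w₂ TA, (G.neighborFinset z ∩ Uset).card ≤
              ∑ z ∈ I, (G.neighborFinset z ∩ Uset).card :=
            Finset.sum_le_sum_of_subset hinssub
          omega
        · -- w₁ ≠ w₂ : x₁ joins, closure too large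
          have hw₁S' : w₁ ∈ bootClosure G 2 {yg a ha, b} := hIS' w₁ hw₁I hw12
          have hyx₁adj : G.Adj x₁ (yg a ha) :=
            (hxprop x₁ hx₁mem).2 (yg a ha) hyU2 hyax
          have hw₁y : w₁ ≠ yg a ha := fun heq => hyI2 (heq ▸ hw₁I)
          have hx₁S' : x₁ ∈ bootClosure G 2 {yg a ha, b} :=
            mem_bootClosure_of_two G hw₁S' hyS' hw₁y hadjx₁w₁ hyx₁adj
          have hx₁I : x₁ ∉ I := (hUmem x₁).mp hx₁U
          have hbigsub : insert (yg a ha) (insert x₁ (I.erase w₂)) ⊆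
              bootClosure G 2 {yg a ha, b} := by
            intro p hp
            rcases Finset.mem_insert.mp hp with h1 | hp2
            · rw [h1]; exact hyS'
            rcases Finset.mem_insert.mp hp2 with h2 | hp3
            · rw [h2]; exact hx₁S'
            obtain ⟨hpw, hpI⟩ := Finset.mem_erase.mp hp3
            exact hIS' p hpI hpw
          have hbigcard : (insert (yg a ha) (insert x₁ (I.erase w₂))).card = k + 2 := by
            rw [Finset.card_insert_of_notMem, Finset.card_insert_of_notMem, herasecard]
            · intro hc
              exact hx₁I (Finset.mem_of_mem_erase hc)
            · intro hc
              rcases Finset.mem_insert.mp hc with h1 | h2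
              · exact hyax h1
              · exact hyI2 (Finset.mem_of_mem_erase h2)
          have hmax3 := hImax {yg a ha, b} (Finset.card_pair hyb)
            ⟨a, Finset.mem_inter.mpr ⟨haS', hIsubL haI⟩⟩
          have := Finset.card_le_card hbigsub
          omega
      obtain ⟨a₁, ha₁, a₂, ha₂, ha12⟩ := Finset.one_lt_card.mp
        (show 1 < TA.card by omega)
      by_cases hy1 : yg a₁ ha₁ = x₁
      · refine hfinal a₂ a₁ ha₂ ha₁ (Ne.symm ha12) ?_
        intro hc
        exact ha12 (hyinj a₁ ha₁ a₂ ha₂ (by rw [hy1, hc]))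
      · exact hfinal a₁ a₂ ha₁ ha₂ ha12 hy1
  · -- u ≥ c + 1
    have huge : c + 1 ≤ u := by omega
    have key : ∀ w ∈ L ∩ I, u + 1 - c ≤ (G.neighborFinset w ∩ Uset).card := by
      intro w hw
      have hwI : w ∈ I := (Finset.mem_inter.mp hw).2
      have hwL : k ≤ G.degree w := (hLdeg w).mp (Finset.mem_inter.mp hw).1
      have h1 := hdeg_split w
      have h2 := hdIle w hwI
      omega
    have hsum : t * (u + 1 - c) ≤ u := by
      have h1 := Finset.card_nsmul_le_sum (L ∩ I)
        (fun w => (G.neighborFinset w ∩ Uset).card) (u + 1 - c) key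
      have h2 : ∑ w ∈ L ∩ I, (G.neighborFinset w ∩ Uset).card ≤ u :=
        le_trans (Finset.sum_le_sum_of_subset Finset.inter_subset_right) hEIU
      rw [smul_eq_mul] at h1
      rw [htdef]
      omega
    have h1 : (c - 2) * (u + 1 - c) ≤ t * (u + 1 - c) :=
      Nat.mul_le_mul_right _ htc
    have h2 : (c - 2) * (u + 1 - c) ≤ u := le_trans h1 hsum
    zify [show 2 ≤ c by omega, show c ≤ u + 1 by omega] at h2
    have hc7 : (7 : ℤ) ≤ (c : ℤ) := by exact_mod_cast (by omega : 7 ≤ c)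
    have hcu : (c : ℤ) + 1 ≤ (u : ℤ) := by exact_mod_cast (by omega : c + 1 ≤ u)
    have hexp : ((c:ℤ) - 2) * ((u:ℤ) + 1 - (c:ℤ)) =
        ((c:ℤ) - 3) * ((u:ℤ) + 1 - (c:ℤ)) + ((u:ℤ) + 1 - (c:ℤ)) := by ring
    have hm : ((c:ℤ) - 3) * 2 ≤ ((c:ℤ) - 3) * ((u:ℤ) + 1 - (c:ℤ)) :=
      mul_le_mul_of_nonneg_left (by linarith) (by linarith)
    linarith
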